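/- For a common-interest resource allocation game with n agents and local welfare w, the reciprocal 1/P* of the optimal value P* of the linear program (P[k]) lower-bounds the k-strong price of anarchy over the class G_n: for every game G ∈ G_n with welfare W(a) = Σ_r v_r w(|a|_r), every k-strong Nash equilibrium a* and welfare-optimal a° satisfy W(a*) ≥ (1/P*)·W(a°), where (P[k]) minimizes ρ over ρ ∈ ℝ, ν_1,...,ν_k ≥ 0 subject to: for all (e,x,o) with 1 ≤ e+x+o ≤ n, 0 ≥ w(o+x) − ρ·w(e+x) + Σ_{ζ=1}^{k} ν_ζ·( C(n,ζ)·w(e+x) − Σ_{α≤e, β≤o, α+β≤ζ} C(e,α)C(o,β)C(n−e−o,ζ−α−β)·w(e+x+β−α) ). -/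

import Mathlib

open Finset

/-- In the joint action `a`, replace the actions of the agents in `Γ` by those from `a'`. -/
def deviate {n : ℕ} {A : Fin n → Type*} (a a' : ∀ i, A i) (Γ : Finset (Fin n)) :
    ∀ i, A i := fun i => if i ∈ Γ then a' i else a i

/-- `a` is a k-strong Nash equilibrium of the common-interest game with welfare `W`:
no group of between 1 and k agents can deviate to strictly improve `W`. -/
def kSNE {n : ℕ} {A : Fin n → Type*} (W : (∀ i, A i) → ℝ) (k : ℕ) (a : ∀ i, A i) : Prop :=
  ∀ Γ : Finset (Fin n), 1 ≤ Γ.card → Γ.card ≤ k → ∀ a' : ∀ i, A i,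
    W (deviate a a' Γ) ≤ W a


lemma fiber_card {ι : Type*} [Fintype ι] [DecidableEq ι]
    (E O : Finset ι) (hEO : Disjoint E O) (ζ α β : ℕ) (hαβ : α + β ≤ ζ) :
    ((Finset.univ.powersetCard ζ).filter
      (fun Γ => (Γ ∩ E).card = α ∧ (Γ ∩ O).card = β)).card
    = E.card.choose α * (O.card.choose β *
        (Fintype.card ι - E.card - O.card).choose (ζ - α - β)) := by
  classical
  set Z : Finset ι := (E ∪ O)ᶜ with hZ
  have hZE : Disjoint Z E := by
    rw [disjoint_left]; intro a ha; simp only [hZ, mem_compl, mem_union] at ha; tauto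
  have hZO : Disjoint Z O := by
    rw [disjoint_left]; intro a ha; simp only [hZ, mem_compl, mem_union] at ha; tauto
  have hZcard : Z.card = Fintype.card ι - E.card - O.card := by
    rw [hZ, card_compl, card_union_of_disjoint hEO]
    omega
  have key : ((Finset.univ.powersetCard ζ).filter
      (fun Γ => (Γ ∩ E).card = α ∧ (Γ ∩ O).card = β)).card
      = ((E.powersetCard α) ×ˢ (O.powersetCard β) ×ˢ (Z.powersetCard (ζ - α - β))).card := by
    apply Finset.card_bij' (fun Γ _ => (Γ ∩ E, Γ ∩ O, Γ ∩ Z))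
      (fun p _ => p.1 ∪ p.2.1 ∪ p.2.2)
    · rintro Γ hΓ
      simp only [mem_filter, mem_powersetCard] at hΓ
      obtain ⟨⟨-, hcard⟩, hα, hβ⟩ := hΓ
      have hdecomp : Γ = (Γ ∩ E) ∪ (Γ ∩ O) ∪ (Γ ∩ Z) := by
        ext a; simp only [mem_union, mem_inter, hZ, mem_compl]; tauto
      have hd1 : Disjoint (Γ ∩ E) (Γ ∩ O) :=
        (hEO.mono inter_subset_right inter_subset_right)
      have hd2 : Disjoint ((Γ ∩ E) ∪ (Γ ∩ O)) (Γ ∩ Z) := by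
        refine Finset.disjoint_union_left.2 ⟨?_, ?_⟩
        · exact (hZE.symm.mono inter_subset_right inter_subset_right)
        · exact (hZO.symm.mono inter_subset_right inter_subset_right)
      have hcards : α + β + (Γ ∩ Z).card = ζ := by
        rw [← hα, ← hβ, ← card_union_of_disjoint hd1, ← card_union_of_disjoint hd2, ← hdecomp, hcard]
      simp only [mem_product, mem_powersetCard]
      exact ⟨⟨inter_subset_right, hα⟩, ⟨inter_subset_right, hβ⟩,
        ⟨inter_subset_right, by omega⟩⟩
    · rintro ⟨P, Q, S⟩ hp
      simp only [mem_product, mem_powersetCard] at hp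
      obtain ⟨⟨hPE, hPc⟩, ⟨hQO, hQc⟩, hSZ, hSc⟩ := hp
      have hd1 : Disjoint P Q := hEO.mono hPE hQO
      have hd2 : Disjoint (P ∪ Q) S := by
        refine Finset.disjoint_union_left.2 ⟨(hZE.mono hSZ hPE).symm, (hZO.mono hSZ hQO).symm⟩
      simp only [mem_filter, mem_powersetCard]
      refine ⟨⟨subset_univ _, ?_⟩, ?_, ?_⟩
      · rw [card_union_of_disjoint hd2, card_union_of_disjoint hd1, hPc, hQc, hSc]; omega
      · have : (P ∪ Q ∪ S) ∩ E = P := by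
          ext a
          have h1 : a ∈ Q → a ∉ E := fun h => disjoint_right.1 hEO (hQO h)
          have h2 : a ∈ S → a ∉ E := fun h => disjoint_left.1 hZE (hSZ h)
          have h3 : a ∈ P → a ∈ E := @hPE a
          simp only [mem_inter, mem_union]
          tauto
        rw [this, hPc]
      · have : (P ∪ Q ∪ S) ∩ O = Q := by
          ext a
          have h1 : a ∈ P → a ∉ O := fun h => disjoint_left.1 hEO (hPE h)
          have h2 : a ∈ S → a ∉ O := fun h => disjoint_left.1 hZO (hSZ h)
          have h3 : a ∈ Q → a ∈ O := @hQO a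
          simp only [mem_inter, mem_union]
          tauto
        rw [this, hQc]
    · intro Γ hΓ
      ext a; simp only [mem_union, mem_inter, hZ, mem_compl]; tauto
    · rintro ⟨P, Q, S⟩ hp
      simp only [mem_product, mem_powersetCard] at hp
      obtain ⟨⟨hPE, hPc⟩, ⟨hQO, hQc⟩, hSZ, hSc⟩ := hp
      simp only [Prod.mk.injEq]
      refine ⟨?_, ?_, ?_⟩ <;> ext a <;>
        [ (have h1 : a ∈ Q → a ∉ E := fun h => disjoint_right.1 hEO (hQO h);
           have h2 : a ∈ S → a ∉ E := fun h => disjoint_left.1 hZE (hSZ h);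
           have h3 : a ∈ P → a ∈ E := @hPE a);
          (have h1 : a ∈ P → a ∉ O := fun h => disjoint_left.1 hEO (hPE h);
           have h2 : a ∈ S → a ∉ O := fun h => disjoint_left.1 hZO (hSZ h);
           have h3 : a ∈ Q → a ∈ O := @hQO a);
          (have h1 : a ∈ P → a ∉ Z := fun h => disjoint_right.1 hZE (hPE h);
           have h2 : a ∈ Q → a ∉ Z := fun h => disjoint_right.1 hZO (hQO h);
           have h3 : a ∈ S → a ∈ Z := @hSZ a)] <;>
        simp only [mem_inter, mem_union] <;> tauto
  rw [key, card_product, card_product, card_powersetCard, card_powersetCard,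
    card_powersetCard, hZcard]

lemma sum_powersetCard_split {ι : Type*} [Fintype ι] [DecidableEq ι]
    (E O : Finset ι) (hEO : Disjoint E O) (ζ : ℕ) (f : ℕ → ℕ → ℝ) :
    ∑ Γ ∈ Finset.univ.powersetCard ζ, f (Γ ∩ E).card (Γ ∩ O).card
    = ∑ α ∈ Finset.range (E.card+1), ∑ β ∈ Finset.range (O.card+1),
        (if α + β ≤ ζ then
          (E.card.choose α * O.card.choose β *
            (Fintype.card ι - E.card - O.card).choose (ζ-α-β) : ℝ) * f α β
        else 0) := by
  classical
  have step1 : ∀ Γ ∈ Finset.univ.powersetCard ζ,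
      f (Γ ∩ E).card (Γ ∩ O).card
      = ∑ α ∈ Finset.range (E.card+1), ∑ β ∈ Finset.range (O.card+1),
          if (Γ ∩ E).card = α ∧ (Γ ∩ O).card = β then f α β else 0 := by
    intro Γ _
    have hmemE : (Γ ∩ E).card ∈ Finset.range (E.card+1) := by
      simp only [Finset.mem_range, Nat.lt_succ_iff]; exact card_le_card inter_subset_right
    have hmemO : (Γ ∩ O).card ∈ Finset.range (O.card+1) := by
      simp only [Finset.mem_range, Nat.lt_succ_iff]; exact card_le_card inter_subset_right
    symm
    calc ∑ α ∈ Finset.range (E.card+1), ∑ β ∈ Finset.range (O.card+1),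
          (if (Γ ∩ E).card = α ∧ (Γ ∩ O).card = β then f α β else 0)
        = ∑ α ∈ Finset.range (E.card+1),
            (if (Γ ∩ E).card = α then
              ∑ β ∈ Finset.range (O.card+1),
                (if (Γ ∩ O).card = β then f α β else 0) else 0) := by
          refine Finset.sum_congr rfl fun α _ => ?_
          by_cases h : (Γ ∩ E).card = α <;> simp [h]
      _ = f (Γ ∩ E).card (Γ ∩ O).card := by
          rw [Finset.sum_ite_eq, if_pos hmemE, Finset.sum_ite_eq, if_pos hmemO]
  rw [Finset.sum_congr rfl step1, Finset.sum_comm]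
  refine Finset.sum_congr rfl fun α _ => ?_
  rw [Finset.sum_comm]
  refine Finset.sum_congr rfl fun β _ => ?_
  rw [← Finset.sum_filter, Finset.sum_const, nsmul_eq_mul]
  by_cases hc : α + β ≤ ζ
  · rw [if_pos hc, fiber_card E O hEO ζ α β hc]
    push_cast
    ring
  · rw [if_neg hc]
    have : ((Finset.univ.powersetCard ζ).filter
        (fun Γ => (Γ ∩ E).card = α ∧ (Γ ∩ O).card = β)) = ∅ := by
      rw [Finset.filter_eq_empty_iff]
      rintro Γ hΓ ⟨hα, hβ⟩
      rw [Finset.mem_powersetCard] at hΓ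
      have hd : Disjoint (Γ ∩ E) (Γ ∩ O) :=
        hEO.mono inter_subset_right inter_subset_right
      have : (Γ ∩ E).card + (Γ ∩ O).card ≤ Γ.card := by
        rw [← card_union_of_disjoint hd]
        exact card_le_card (union_subset inter_subset_left inter_subset_left)
      omega
    rw [this]
    simp

/-- soundness of the LP (P[k]) for resource allocation games. If
(ρ, ν_1,…,ν_k) with ν_ζ ≥ 0 satisfies, for all labels (e,x,o) with 1 ≤ e+x+o ≤ n,
0 ≥ w(o+x) − ρ·w(e+x) + Σ_ζ ν_ζ·(C(n,ζ)·w(e+x) − Σ_{α,β} C(e,α)C(o,β)C(n−e−o,ζ−α−β)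
w(e+x+β−α)), then for every n-agent resource allocation game with local welfare w,
every k-strong Nash equilibrium a* and every welfare maximizer a° satisfy
W(a°) ≤ ρ·W(a*); i.e., 1/ρ (hence 1/P*) lower-bounds the k-strong price of anarchy. -/
theorem stmt_17 {n k : ℕ} (hn : 1 ≤ n) (hk1 : 1 ≤ k) (hkn : k ≤ n)
    {R : Type*} [Fintype R] [DecidableEq R]
    {A : Fin n → Type*} [∀ i, Fintype (A i)] [∀ i, Nonempty (A i)]
    (act : ∀ i, A i → Finset R)
    (v : R → ℝ) (hv : ∀ r, 0 ≤ v r)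
    (w : ℕ → ℝ) (hw0 : w 0 = 0) (hwpos : ∀ y, 1 ≤ y → y ≤ n → 0 < w y)
    (ρ : ℝ) (ν : ℕ → ℝ) (hν : ∀ ζ, 0 ≤ ν ζ)
    (hfeas : ∀ e x o : ℕ, 1 ≤ e + x + o → e + x + o ≤ n →
      w (o + x) - ρ * w (e + x)
        + ∑ ζ ∈ Finset.Icc 1 k, ν ζ *
            ((n.choose ζ : ℝ) * w (e + x)
              - ∑ α ∈ Finset.range (e + 1), ∑ β ∈ Finset.range (o + 1),
                  (if α + β ≤ ζ then
                    (e.choose α * o.choose β * (n - e - o).choose (ζ - α - β) : ℝ) *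
                      w (e + x + β - α)
                   else 0)) ≤ 0) :
    ∀ astar aopt : ∀ i, A i,
      kSNE (fun a => ∑ r : R, v r *
        w ((Finset.univ.filter (fun i : Fin n => r ∈ act i (a i))).card)) k astar →
      (∀ a : ∀ i, A i,
        (∑ r : R, v r *
          w ((Finset.univ.filter (fun i : Fin n => r ∈ act i (a i))).card))
        ≤ ∑ r : R, v r *
          w ((Finset.univ.filter (fun i : Fin n => r ∈ act i (aopt i))).card)) →
      (∑ r : R, v r *
          w ((Finset.univ.filter (fun i : Fin n => r ∈ act i (aopt i))).card))
        ≤ ρ * ∑ r : R, v r *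
            w ((Finset.univ.filter (fun i : Fin n => r ∈ act i (astar i))).card) := by
  classical
  intro astar aopt hSNE _hopt
  -- names
  set W : (∀ i, A i) → ℝ := fun a => ∑ r : R, v r *
    w ((Finset.univ.filter (fun i : Fin n => r ∈ act i (a i))).card) with hW
  show W aopt ≤ ρ * W astar
  -- per-resource sets
  set Ns : R → Finset (Fin n) :=
    fun r => Finset.univ.filter (fun i => r ∈ act i (astar i)) with hNs
  set No : R → Finset (Fin n) :=
    fun r => Finset.univ.filter (fun i => r ∈ act i (aopt i)) with hNo
  set E : R → Finset (Fin n) := fun r => Ns r \ No r with hE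
  set X : R → Finset (Fin n) := fun r => Ns r ∩ No r with hX
  set O : R → Finset (Fin n) := fun r => No r \ Ns r with hO
  have hEO : ∀ r, Disjoint (E r) (O r) := by
    intro r
    rw [disjoint_left]
    intro a ha hb
    simp only [hE, hO, mem_sdiff] at ha hb
    exact hb.2 ha.1
  have hNscard : ∀ r, (Ns r).card = (E r).card + (X r).card := by
    intro r
    simp only [hE, hX]
    exact (Finset.card_sdiff_add_card_inter (Ns r) (No r)).symm
  have hNocard : ∀ r, (No r).card = (O r).card + (X r).card := by
    intro r
    have h1 := Finset.card_sdiff_add_card_inter (No r) (Ns r)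
    have h2 : No r ∩ Ns r = X r := by simp only [hX]; rw [inter_comm]
    rw [h2] at h1
    simp only [hO]
    omega
  have hexo_le : ∀ r, (E r).card + (X r).card + (O r).card ≤ n := by
    intro r
    have hd : Disjoint (Ns r) (O r) := by
      rw [disjoint_right]
      intro a ha
      simp only [hO, mem_sdiff] at ha
      exact ha.2
    calc (E r).card + (X r).card + (O r).card = (Ns r ∪ O r).card := by
          rw [card_union_of_disjoint hd, hNscard]
      _ ≤ (Finset.univ : Finset (Fin n)).card := card_le_card (subset_univ _)
      _ = n := by simp
  -- deviated count
  have hcount : ∀ r (Γ : Finset (Fin n)),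
      (Finset.univ.filter (fun i => r ∈ act i (deviate astar aopt Γ i))).card
      = (E r).card + (X r).card + (Γ ∩ O r).card - (Γ ∩ E r).card := by
    intro r Γ
    have hset : Finset.univ.filter (fun i => r ∈ act i (deviate astar aopt Γ i))
        = X r ∪ (E r \ Γ) ∪ (O r ∩ Γ) := by
      ext i
      rw [mem_filter]
      by_cases hiΓ : i ∈ Γ <;>
        simp [deviate, hiΓ, hX, hE, hO, hNs, hNo, mem_sdiff, mem_inter, mem_filter] <;>
        tauto
    have hd1 : Disjoint (X r) (E r \ Γ) := by
      rw [disjoint_left]; intro a ha hb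
      simp only [hX, hE, mem_inter, mem_sdiff] at ha hb
      exact hb.1.2 ha.2
    have hd2 : Disjoint (X r ∪ (E r \ Γ)) (O r ∩ Γ) := by
      rw [disjoint_left]; rintro a ha hb
      simp only [hX, hE, hO, mem_union, mem_inter, mem_sdiff] at ha hb
      rcases ha with ⟨h1, _⟩ | ⟨⟨h1, _⟩, _⟩ <;> exact hb.1.2 h1
    have hEΓ := Finset.card_sdiff_add_card_inter (E r) Γ
    have hEΓ' : E r ∩ Γ = Γ ∩ E r := inter_comm _ _
    have hOΓ : O r ∩ Γ = Γ ∩ O r := inter_comm _ _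
    rw [hset, card_union_of_disjoint hd2, card_union_of_disjoint hd1, hOΓ]
    rw [hEΓ'] at hEΓ
    have : (Γ ∩ E r).card ≤ (E r).card := card_le_card inter_subset_right
    omega
  -- inner double sum
  set I2 : R → ℕ → ℝ := fun r ζ =>
    ∑ α ∈ Finset.range ((E r).card + 1), ∑ β ∈ Finset.range ((O r).card + 1),
      (if α + β ≤ ζ then
        ((E r).card.choose α * (O r).card.choose β *
          (n - (E r).card - (O r).card).choose (ζ - α - β) : ℝ) *
          w ((E r).card + (X r).card + β - α)
       else 0) with hI2
  have hinner : ∀ (r : R) (ζ : ℕ),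
      ∑ Γ ∈ (Finset.univ : Finset (Fin n)).powersetCard ζ,
        w ((Finset.univ.filter (fun i => r ∈ act i (deviate astar aopt Γ i))).card)
      = I2 r ζ := by
    intro r ζ
    have h := sum_powersetCard_split (E r) (O r) (hEO r) ζ
      (fun α β => w ((E r).card + (X r).card + β - α))
    rw [Fintype.card_fin] at h
    simp only [hI2]
    rw [← h]
    refine Finset.sum_congr rfl fun Γ _ => ?_
    rw [hcount r Γ]
  -- coalition sums
  have hSwap : ∀ ζ : ℕ,
      ∑ Γ ∈ (Finset.univ : Finset (Fin n)).powersetCard ζ, W (deviate astar aopt Γ)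
      = ∑ r : R, v r * I2 r ζ := by
    intro ζ
    simp only [hW]
    rw [Finset.sum_comm]
    refine Finset.sum_congr rfl fun r _ => ?_
    rw [← Finset.mul_sum, hinner r ζ]
  have hS_le : ∀ ζ : ℕ, 1 ≤ ζ → ζ ≤ k →
      ∑ r : R, v r * I2 r ζ ≤ (n.choose ζ : ℝ) * W astar := by
    intro ζ h1 h2
    rw [← hSwap ζ]
    calc ∑ Γ ∈ (Finset.univ : Finset (Fin n)).powersetCard ζ, W (deviate astar aopt Γ)
        ≤ ∑ Γ ∈ (Finset.univ : Finset (Fin n)).powersetCard ζ, W astar := by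
          refine Finset.sum_le_sum fun Γ hΓ => ?_
          rw [Finset.mem_powersetCard] at hΓ
          exact hSNE Γ (by rw [hΓ.2]; exact h1) (by rw [hΓ.2]; exact h2) aopt
      _ = (n.choose ζ : ℝ) * W astar := by
          rw [Finset.sum_const, Finset.card_powersetCard, Finset.card_univ,
            Fintype.card_fin, nsmul_eq_mul]
  -- welfare rewrites
  have hWstar : W astar = ∑ r : R, v r * w ((E r).card + (X r).card) := by
    simp only [hW]
    refine Finset.sum_congr rfl fun r _ => ?_
    rw [← hNscard r]
  have hWopt : W aopt = ∑ r : R, v r * w ((O r).card + (X r).card) := by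
    simp only [hW]
    refine Finset.sum_congr rfl fun r _ => ?_
    rw [← hNocard r]
  -- per-resource feasibility
  have hT : ∀ r : R,
      w ((O r).card + (X r).card) - ρ * w ((E r).card + (X r).card)
        + ∑ ζ ∈ Finset.Icc 1 k, ν ζ *
            ((n.choose ζ : ℝ) * w ((E r).card + (X r).card) - I2 r ζ) ≤ 0 := by
    intro r
    rcases Nat.eq_zero_or_pos ((E r).card + (X r).card + (O r).card) with h0 | hpos
    · have he : (E r).card = 0 := by omega
      have hx : (X r).card = 0 := by omega
      have ho : (O r).card = 0 := by omega
      simp only [hI2, he, hx, ho]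
      simp [hw0]
    · exact hfeas _ _ _ hpos (hexo_le r)
  have hsumT : ∑ r : R, v r *
      (w ((O r).card + (X r).card) - ρ * w ((E r).card + (X r).card)
        + ∑ ζ ∈ Finset.Icc 1 k, ν ζ *
            ((n.choose ζ : ℝ) * w ((E r).card + (X r).card) - I2 r ζ)) ≤ 0 :=
    Finset.sum_nonpos fun r _ => mul_nonpos_iff.2 (Or.inl ⟨hv r, hT r⟩)
  -- algebraic expansion of the summed feasibility
  have hsplit : ∑ r : R, v r *
      (w ((O r).card + (X r).card) - ρ * w ((E r).card + (X r).card)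
        + ∑ ζ ∈ Finset.Icc 1 k, ν ζ *
            ((n.choose ζ : ℝ) * w ((E r).card + (X r).card) - I2 r ζ))
      = W aopt - ρ * W astar
        + ∑ ζ ∈ Finset.Icc 1 k, ν ζ *
            ((n.choose ζ : ℝ) * W astar - ∑ r : R, v r * I2 r ζ) := by
    rw [hWopt, hWstar]
    calc ∑ r : R, v r *
        (w ((O r).card + (X r).card) - ρ * w ((E r).card + (X r).card)
          + ∑ ζ ∈ Finset.Icc 1 k, ν ζ *
              ((n.choose ζ : ℝ) * w ((E r).card + (X r).card) - I2 r ζ))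
        = ∑ r : R, (v r * w ((O r).card + (X r).card)
            - ρ * (v r * w ((E r).card + (X r).card))
            + ∑ ζ ∈ Finset.Icc 1 k, ν ζ *
                ((n.choose ζ : ℝ) * (v r * w ((E r).card + (X r).card))
                  - v r * I2 r ζ)) := by
          refine Finset.sum_congr rfl fun r _ => ?_
          rw [mul_add, mul_sub, Finset.mul_sum]
          congr 1
          · ring
          · refine Finset.sum_congr rfl fun ζ _ => ?_
            ring
      _ = (∑ r : R, v r * w ((O r).card + (X r).card))
            - ρ * (∑ r : R, v r * w ((E r).card + (X r).card))
            + ∑ ζ ∈ Finset.Icc 1 k, ν ζ *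
                ((n.choose ζ : ℝ) * (∑ r : R, v r * w ((E r).card + (X r).card))
                  - ∑ r : R, v r * I2 r ζ) := by
          rw [Finset.sum_add_distrib, Finset.sum_sub_distrib, ← Finset.mul_sum,
            Finset.sum_comm]
          congr 1
          refine Finset.sum_congr rfl fun ζ _ => ?_
          rw [← Finset.mul_sum, Finset.sum_sub_distrib, ← Finset.mul_sum]
  rw [hsplit] at hsumT
  have hnonneg : 0 ≤ ∑ ζ ∈ Finset.Icc 1 k, ν ζ *
      ((n.choose ζ : ℝ) * W astar - ∑ r : R, v r * I2 r ζ) := by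
    refine Finset.sum_nonneg fun ζ hζ => ?_
    rw [Finset.mem_Icc] at hζ
    exact mul_nonneg (hν ζ) (by linarith [hS_le ζ hζ.1 hζ.2])
  linarith
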